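/- Let f be a rational map whose restriction to the closed unit disk 𝔻̄ is injective and which has no poles on the unit circle S¹. Set Ω = f(𝔻) and define σ : f(𝔻̄) → ℂ̂ by σ = f ∘ η ∘ (f|_{𝔻̄})⁻¹, where η(z) = 1/z̄. Then σ is continuous on f(𝔻̄), σ(ζ) = ζ for every ζ ∈ f(S¹) = ∂Ω, and σ is anti-meromorphic on Ω. In particular, Ω is a quadrature domain with Schwarz reflection map σ. -/

import Mathlib

open OnePoint Polynomial

/-- Evaluation of the rational map `P/Q` (with `P, Q` coprime, `Q ≠ 0`) on the Riemann
sphere `ℂ̂ = OnePoint ℂ`, with the standard values at poles and at `∞`. -/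
noncomputable def ratSphereEval (P Q : Polynomial ℂ) : OnePoint ℂ → OnePoint ℂ := fun z =>
  Option.rec (motive := fun _ => OnePoint ℂ)
    (if Q.degree < P.degree then (∞ : OnePoint ℂ)
     else if P.degree < Q.degree then ((0 : ℂ) : OnePoint ℂ)
     else ((P.leadingCoeff / Q.leadingCoeff : ℂ) : OnePoint ℂ))
    (fun w => if Q.eval w = 0 then (∞ : OnePoint ℂ)
      else ((P.eval w / Q.eval w : ℂ) : OnePoint ℂ)) z

/-- Reflection `η(z) = 1/z̄` in the unit circle, as a map of the Riemann sphere
(`η(0) = ∞`, `η(∞) = 0`). -/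
noncomputable def sphereUnitReflection : OnePoint ℂ → OnePoint ℂ := fun z =>
  Option.rec (motive := fun _ => OnePoint ℂ) (((0 : ℂ) : OnePoint ℂ))
    (fun w => if w = 0 then (∞ : OnePoint ℂ)
      else ((((starRingEnd ℂ) w)⁻¹ : ℂ) : OnePoint ℂ)) z

open Filter Topology Set Metric Complex

noncomputable def QD_opval : OnePoint ℂ → ℂ := fun z => Option.rec 0 (fun w => w) z

@[simp] lemma QD_opval_coe (w : ℂ) : QD_opval (w : OnePoint ℂ) = w := rfl

lemma QD_rs_coe (P Q : Polynomial ℂ) (z : ℂ) :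
    ratSphereEval P Q (z : OnePoint ℂ)
      = if Q.eval z = 0 then (∞ : OnePoint ℂ)
        else ((P.eval z / Q.eval z : ℂ) : OnePoint ℂ) := rfl

lemma QD_rs_infty (P Q : Polynomial ℂ) :
    ratSphereEval P Q ∞ = (if Q.degree < P.degree then (∞ : OnePoint ℂ)
     else if P.degree < Q.degree then ((0 : ℂ) : OnePoint ℂ)
     else ((P.leadingCoeff / Q.leadingCoeff : ℂ) : OnePoint ℂ)) := rfl

lemma QD_eta_coe (z : ℂ) :
    sphereUnitReflection (z : OnePoint ℂ)
      = if z = 0 then ∞ else ((((starRingEnd ℂ) z)⁻¹ : ℂ) : OnePoint ℂ) := rfl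

lemma QD_eta_infty : sphereUnitReflection ∞ = ((0:ℂ) : OnePoint ℂ) := rfl

lemma QD_ev_ne_cocompact {q : Polynomial ℂ} (hq : q ≠ 0) :
    ∀ᶠ z in cocompact ℂ, q.eval z ≠ 0 := by
  have hfin : {z : ℂ | q.IsRoot z}.Finite := q.finite_setOf_isRoot hq
  have : {z : ℂ | q.IsRoot z}ᶜ ∈ cocompact ℂ :=
    mem_cocompact.2 ⟨_, hfin.isCompact, subset_rfl⟩
  filter_upwards [this] with z hz
  exact hz

lemma QD_ne_zero_cocompact : ∀ᶠ z : ℂ in cocompact ℂ, z ≠ 0 := by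
  have : ({0} : Set ℂ)ᶜ ∈ cocompact ℂ :=
    mem_cocompact.2 ⟨_, isCompact_singleton, subset_rfl⟩
  filter_upwards [this] with z hz
  simpa using hz

lemma QD_tendsto_inv_cocompact : Tendsto (fun z : ℂ => z⁻¹) (cocompact ℂ) (𝓝 0) := by
  rw [tendsto_zero_iff_norm_tendsto_zero]
  simp only [norm_inv]
  exact (tendsto_norm_cocompact_atTop).inv_tendsto_atTop

lemma QD_tendsto_poly_div_pow (p : Polynomial ℂ) :
    Tendsto (fun z : ℂ => p.eval z / z ^ p.natDegree) (cocompact ℂ) (𝓝 p.leadingCoeff) := by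
  set n := p.natDegree
  have key : ∀ z : ℂ, z ≠ 0 →
      p.eval z / z ^ n = ∑ i ∈ Finset.range (n+1), p.coeff i * (z⁻¹) ^ (n - i) := by
    intro z hz
    rw [eval_eq_sum_range, Finset.sum_div]
    refine Finset.sum_congr rfl fun i hi => ?_
    rw [Finset.mem_range] at hi
    have hin : i ≤ n := by omega
    rw [mul_div_assoc, inv_pow]
    congr 1
    rw [div_eq_iff (pow_ne_zero _ hz), inv_mul_eq_div, eq_div_iff (pow_ne_zero _ hz), ← pow_add]
    congr 1
    omega
  have hlim : Tendsto (fun z : ℂ => ∑ i ∈ Finset.range (n+1), p.coeff i * (z⁻¹) ^ (n - i))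
      (cocompact ℂ) (𝓝 (∑ i ∈ Finset.range (n+1), p.coeff i * (0:ℂ) ^ (n - i))) := by
    refine tendsto_finset_sum _ fun i _ => ?_
    exact ((continuous_const.mul (continuous_pow (n - i))).tendsto 0).comp QD_tendsto_inv_cocompact
  have hval : ∑ i ∈ Finset.range (n+1), p.coeff i * (0:ℂ) ^ (n - i) = p.leadingCoeff := by
    rw [Finset.sum_eq_single n]
    · rw [Nat.sub_self, pow_zero, mul_one]; rfl
    · intro i hi hne
      rw [Finset.mem_range] at hi
      have : n - i ≠ 0 := by omega
      simp [zero_pow this]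
    · intro h
      exact absurd (Finset.self_mem_range_succ n) h
  rw [← hval]
  exact hlim.congr' (by filter_upwards [QD_ne_zero_cocompact] with z hz using (key z hz).symm)

-- helper: coe to infinity via norm atTop
lemma QD_tendsto_coe_infty_of_norm {l : Filter ℂ} {f : ℂ → ℂ}
    (h : Tendsto (fun z => ‖f z‖) l atTop) :
    Tendsto (fun z => ((f z : ℂ) : OnePoint ℂ)) l (𝓝 (∞ : OnePoint ℂ)) := by
  refine (OnePoint.tendsto_coe_infty).comp ?_
  rw [Filter.coclosedCompact_eq_cocompact, ← Metric.cobounded_eq_cocompact,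
    ← tendsto_norm_atTop_iff_cobounded]
  exact h

lemma QD_ratio_eq (P Q : Polynomial ℂ) {z : ℂ} (hz : z ≠ 0) (h : Q.natDegree ≤ P.natDegree) :
    (P.eval z / z ^ P.natDegree) * (Q.eval z / z ^ Q.natDegree)⁻¹
      * z ^ (P.natDegree - Q.natDegree) = P.eval z / Q.eval z := by
  rcases eq_or_ne (Q.eval z) 0 with hQz | hQz
  · simp [hQz]
  · have hzm := pow_ne_zero P.natDegree hz
    have hzq := pow_ne_zero Q.natDegree hz
    have hpow : z ^ (P.natDegree - Q.natDegree) * z ^ Q.natDegree = z ^ P.natDegree := by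
      rw [← pow_add]; congr 1; omega
    field_simp
    rw [mul_assoc (eval z P), mul_comm (z ^ Q.natDegree), hpow]

lemma QD_ratio_eq' (P Q : Polynomial ℂ) {z : ℂ} (hz : z ≠ 0) (h : P.natDegree ≤ Q.natDegree) :
    (P.eval z / z ^ P.natDegree) * (Q.eval z / z ^ Q.natDegree)⁻¹
      * (z⁻¹) ^ (Q.natDegree - P.natDegree) = P.eval z / Q.eval z := by
  rcases eq_or_ne (Q.eval z) 0 with hQz | hQz
  · simp [hQz]
  · have hzm := pow_ne_zero P.natDegree hz
    have hzq := pow_ne_zero Q.natDegree hz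
    have hpow : z ^ (Q.natDegree - P.natDegree) * z ^ P.natDegree = z ^ Q.natDegree := by
      rw [← pow_add]; congr 1; omega
    rw [inv_pow]
    field_simp
    linear_combination (-(eval z P)) * hpow

lemma QD_key_cocompact (P Q : Polynomial ℂ) (hQ : Q ≠ 0) :
    Tendsto (fun z : ℂ => ratSphereEval P Q (z : OnePoint ℂ)) (cocompact ℂ)
      (𝓝 (ratSphereEval P Q ∞)) := by
  have hlcQ : Q.leadingCoeff ≠ 0 := leadingCoeff_ne_zero.mpr hQ
  have hev : (fun z : ℂ => ((P.eval z / Q.eval z : ℂ) : OnePoint ℂ))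
      =ᶠ[cocompact ℂ] (fun z : ℂ => ratSphereEval P Q (z : OnePoint ℂ)) := by
    filter_upwards [QD_ev_ne_cocompact hQ] with z hz
    rw [QD_rs_coe, if_neg hz]
  have hAB : Tendsto (fun z : ℂ => (P.eval z / z ^ P.natDegree)
      * (Q.eval z / z ^ Q.natDegree)⁻¹) (cocompact ℂ)
      (𝓝 (P.leadingCoeff * Q.leadingCoeff⁻¹)) :=
    (QD_tendsto_poly_div_pow P).mul ((QD_tendsto_poly_div_pow Q).inv₀ hlcQ)
  have hle : P.natDegree ≤ Q.natDegree →
      Tendsto (fun z : ℂ => ((P.eval z / Q.eval z : ℂ) : OnePoint ℂ)) (cocompact ℂ)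
        (𝓝 ((P.leadingCoeff * Q.leadingCoeff⁻¹
            * (0:ℂ) ^ (Q.natDegree - P.natDegree) : ℂ) : OnePoint ℂ)) := by
    intro h
    refine (OnePoint.continuous_coe.tendsto _).comp ?_
    refine Tendsto.congr' ?_ (hAB.mul
      (((continuous_pow (Q.natDegree - P.natDegree)).tendsto (0:ℂ)).comp
        QD_tendsto_inv_cocompact))
    filter_upwards [QD_ne_zero_cocompact] with z hz
    exact QD_ratio_eq' P Q hz h
  rw [QD_rs_infty]
  rcases lt_trichotomy Q.degree P.degree with hlt | heq | hgt
  · rw [if_pos hlt]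
    have hP : P ≠ 0 := by
      intro h; rw [h, degree_zero] at hlt; exact absurd hlt (by simp)
    have hlcP : P.leadingCoeff ≠ 0 := leadingCoeff_ne_zero.mpr hP
    have hmq : Q.natDegree < P.natDegree := natDegree_lt_natDegree hQ hlt
    refine Tendsto.congr' hev ?_
    refine QD_tendsto_coe_infty_of_norm ?_
    have hnorm : ∀ᶠ z in cocompact ℂ, ‖(P.eval z / z ^ P.natDegree)
        * (Q.eval z / z ^ Q.natDegree)⁻¹‖ * ‖z‖ ^ (P.natDegree - Q.natDegree)
        = ‖P.eval z / Q.eval z‖ := by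
      filter_upwards [QD_ne_zero_cocompact] with z hz
      simp only [← QD_ratio_eq P Q hz (le_of_lt hmq), norm_mul, norm_pow]
    refine Tendsto.congr' hnorm ?_
    refine Filter.Tendsto.pos_mul_atTop
      (show (0:ℝ) < ‖P.leadingCoeff * Q.leadingCoeff⁻¹‖ from
        norm_pos_iff.mpr (mul_ne_zero hlcP (inv_ne_zero hlcQ))) hAB.norm ?_
    exact (tendsto_pow_atTop (by omega : P.natDegree - Q.natDegree ≠ 0)).comp
      tendsto_norm_cocompact_atTop
  · rw [if_neg (heq ▸ lt_irrefl _), if_neg (heq ▸ lt_irrefl _)]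
    have hP : P ≠ 0 := by
      intro h; rw [h, degree_zero] at heq; exact hQ (degree_eq_bot.mp heq)
    have hnat : P.natDegree = Q.natDegree := (natDegree_eq_of_degree_eq heq).symm
    refine Tendsto.congr' hev ?_
    have := hle (le_of_eq hnat)
    rwa [hnat, Nat.sub_self, pow_zero, mul_one, ← div_eq_mul_inv] at this
  · rw [if_neg (asymm hgt), if_pos hgt]
    have hle' : P.natDegree ≤ Q.natDegree := natDegree_le_natDegree (le_of_lt hgt)
    refine Tendsto.congr' hev ?_
    have := hle hle'
    rcases eq_or_ne P 0 with rfl | hP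
    · simp only [leadingCoeff_zero, zero_mul, eval_zero, zero_div] at this ⊢
      exact this
    · have : Q.natDegree - P.natDegree ≠ 0 := by
        have := natDegree_lt_natDegree hP hgt; omega
      simpa [zero_pow this] using hle hle'

lemma QD_coprime_eval_ne {P Q : Polynomial ℂ} (hcop : IsCoprime P Q) {z : ℂ}
    (hz : Q.eval z = 0) : P.eval z ≠ 0 := by
  obtain ⟨a, b, hab⟩ := hcop
  intro h
  have := congrArg (Polynomial.eval z) hab
  simp [h, hz] at this

lemma QD_Qne_punctured {Q : Polynomial ℂ} (hQ : Q ≠ 0) (u : ℂ) :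
    ∀ᶠ z in 𝓝[≠] u, Q.eval z ≠ 0 := by
  have hfin : ({z : ℂ | Q.IsRoot z} \ {u}).Finite := (Q.finite_setOf_isRoot hQ).diff
  have hclosed : IsClosed ({z : ℂ | Q.IsRoot z} \ {u}) := hfin.isClosed
  have hmem : ({z : ℂ | Q.IsRoot z} \ {u})ᶜ ∈ 𝓝 u :=
    hclosed.isOpen_compl.mem_nhds (by simp)
  filter_upwards [eventually_nhdsWithin_of_eventually_nhds hmem, self_mem_nhdsWithin]
    with z hz hz' hQz
  exact hz ⟨hQz, hz'⟩

lemma QD_rs_continuous (P Q : Polynomial ℂ) (hQ : Q ≠ 0) (hcop : IsCoprime P Q) :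
    Continuous (ratSphereEval P Q) := by
  rw [OnePoint.continuous_iff]
  constructor
  · rw [Filter.coclosedCompact_eq_cocompact]
    exact QD_key_cocompact P Q hQ
  · rw [continuous_iff_continuousAt]
    intro u0
    by_cases hQu : Q.eval u0 = 0
    · -- pole
      have hval : ratSphereEval P Q ((u0 : ℂ) : OnePoint ℂ) = ∞ := by
        rw [QD_rs_coe, if_pos hQu]
      rw [ContinuousAt, hval, ← nhdsNE_sup_pure u0, tendsto_sup]
      constructor
      · -- punctured part
        have hev : (fun z : ℂ => ((P.eval z / Q.eval z : ℂ) : OnePoint ℂ))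
            =ᶠ[𝓝[≠] u0] (fun z : ℂ => ratSphereEval P Q (z : OnePoint ℂ)) := by
          filter_upwards [QD_Qne_punctured hQ u0] with z hz
          rw [QD_rs_coe, if_neg hz]
        refine Tendsto.congr' hev ?_
        refine QD_tendsto_coe_infty_of_norm ?_
        have hPu : P.eval u0 ≠ 0 := QD_coprime_eval_ne hcop hQu
        have h1 : Tendsto (fun z : ℂ => ‖P.eval z‖) (𝓝[≠] u0) (𝓝 ‖P.eval u0‖) :=
          ((P.continuous.norm.tendsto u0).mono_left nhdsWithin_le_nhds)
        have h2 : Tendsto (fun z : ℂ => ‖Q.eval z‖⁻¹) (𝓝[≠] u0) atTop := by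
          refine tendsto_inv_nhdsGT_zero.comp ?_
          rw [tendsto_nhdsWithin_iff]
          constructor
          · have := (Q.continuous.norm.tendsto u0).mono_left
              (nhdsWithin_le_nhds (s := {u0}ᶜ))
            rwa [hQu, norm_zero] at this
          · filter_upwards [QD_Qne_punctured hQ u0] with z hz
            exact mem_Ioi.mpr (norm_pos_iff.mpr hz)
        have := Filter.Tendsto.pos_mul_atTop (norm_pos_iff.mpr hPu) h1 h2
        refine this.congr ?_
        intro z
        rw [norm_div, div_eq_mul_inv]
      · -- pure part
        rw [tendsto_pure_left]
        intro s hs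
        rw [hval]
        exact mem_of_mem_nhds hs
    · -- regular point
      have hev : ∀ᶠ z in 𝓝 u0, ratSphereEval P Q ((z : ℂ) : OnePoint ℂ)
          = ((P.eval z / Q.eval z : ℂ) : OnePoint ℂ) := by
        filter_upwards [Q.continuous.continuousAt.eventually_ne hQu] with z hz
        rw [QD_rs_coe, if_neg hz]
      refine ContinuousAt.congr ?_ (hev.mono fun z h => h.symm)
      exact OnePoint.continuous_coe.continuousAt.comp
        ((P.continuous.continuousAt).div (Q.continuous.continuousAt) hQu)

lemma QD_eta_continuous : Continuous sphereUnitReflection := by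
  rw [OnePoint.continuous_iff]
  constructor
  · rw [Filter.coclosedCompact_eq_cocompact]
    have hev : (fun z : ℂ => ((((starRingEnd ℂ) z)⁻¹ : ℂ) : OnePoint ℂ))
        =ᶠ[cocompact ℂ] (fun z : ℂ => sphereUnitReflection (z : OnePoint ℂ)) := by
      filter_upwards [QD_ne_zero_cocompact] with z hz
      rw [QD_eta_coe, if_neg hz]
    refine Tendsto.congr' hev ?_
    rw [QD_eta_infty]
    refine (OnePoint.continuous_coe.tendsto _).comp ?_
    rw [tendsto_zero_iff_norm_tendsto_zero]
    simp only [norm_inv, RCLike.norm_conj]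
    exact (tendsto_norm_cocompact_atTop).inv_tendsto_atTop
  · rw [continuous_iff_continuousAt]
    intro z0
    by_cases hz0 : z0 = 0
    · subst hz0
      have hval : sphereUnitReflection ((0 : ℂ) : OnePoint ℂ) = ∞ := by
        rw [QD_eta_coe, if_pos rfl]
      rw [ContinuousAt, hval, ← nhdsNE_sup_pure (0:ℂ), tendsto_sup]
      constructor
      · have hev : (fun z : ℂ => ((((starRingEnd ℂ) z)⁻¹ : ℂ) : OnePoint ℂ))
            =ᶠ[𝓝[≠] (0:ℂ)] (fun z : ℂ => sphereUnitReflection (z : OnePoint ℂ)) := by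
          filter_upwards [self_mem_nhdsWithin] with z hz
          rw [QD_eta_coe, if_neg (by simpa using hz)]
        refine Tendsto.congr' hev ?_
        refine QD_tendsto_coe_infty_of_norm ?_
        simp only [norm_inv, RCLike.norm_conj]
        refine tendsto_inv_nhdsGT_zero.comp ?_
        rw [tendsto_nhdsWithin_iff]
        refine ⟨?_, ?_⟩
        · have := (continuous_norm.tendsto (0:ℂ)).mono_left (nhdsWithin_le_nhds (s := {(0:ℂ)}ᶜ))
          simpa using this
        · filter_upwards [self_mem_nhdsWithin] with z hz
          exact mem_Ioi.mpr (norm_pos_iff.mpr hz)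
      · rw [tendsto_pure_left]
        intro s hs
        rw [hval]
        exact mem_of_mem_nhds hs
    · have hev : ∀ᶠ z in 𝓝 z0, sphereUnitReflection ((z : ℂ) : OnePoint ℂ)
          = ((((starRingEnd ℂ) z)⁻¹ : ℂ) : OnePoint ℂ) := by
        filter_upwards [continuousAt_id.eventually_ne hz0] with z hz
        rw [QD_eta_coe, if_neg (by simpa using hz)]
      refine ContinuousAt.congr ?_ (hev.mono fun z h => h.symm)
      refine OnePoint.continuous_coe.continuousAt.comp ?_
      exact (Complex.continuous_conj.continuousAt).inv₀ (by simpa using hz0)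

lemma QD_continuousOn_invFunOn {X Y : Type*} [TopologicalSpace X] [TopologicalSpace Y]
    [T2Space Y] [Nonempty X] {f : X → Y} {s : Set X} (hs : IsCompact s)
    (hf : ContinuousOn f s) (hinj : Set.InjOn f s) :
    ContinuousOn (Function.invFunOn f s) (f '' s) := by
  rintro y ⟨x, hxs, rfl⟩
  have hxy : Function.invFunOn f s (f x) = x := hinj.leftInvOn_invFunOn hxs
  rw [ContinuousWithinAt, hxy, tendsto_def]
  intro U hU
  obtain ⟨V, hVU, hVopen, hxV⟩ := mem_nhds_iff.mp hU
  have hC : IsCompact (f '' (s \ V)) :=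
    (hs.diff hVopen).image_of_continuousOn (hf.mono diff_subset)
  have hfx : f x ∉ f '' (s \ V) := by
    rintro ⟨x', ⟨hx's, hx'V⟩, hfx'⟩
    exact hx'V (hinj hx's hxs hfx' ▸ hxV)
  have hmem : (f '' (s \ V))ᶜ ∈ 𝓝 (f x) := hC.isClosed.isOpen_compl.mem_nhds hfx
  filter_upwards [mem_nhdsWithin_of_mem_nhds hmem, self_mem_nhdsWithin] with y hyC hys
  obtain ⟨x', hx's, rfl⟩ := hys
  have hinv : Function.invFunOn f s (f x') = x' := hinj.leftInvOn_invFunOn hx's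
  simp only [Set.mem_preimage, hinv]
  refine hVU ?_
  by_contra h
  exact hyC ⟨x', ⟨hx's, h⟩, rfl⟩

lemma QD_meromorphicAt_polyEval (p : Polynomial ℂ) {m : ℂ → ℂ} {x : ℂ}
    (hm : MeromorphicAt m x) : MeromorphicAt (fun z => p.eval (m z)) x := by
  induction p using Polynomial.induction_on' with
  | add p q hp hq => simpa [Polynomial.eval_add, Pi.add_def] using hp.add hq
  | monomial n a =>
      have := (MeromorphicAt.const a x).mul (hm.pow n)
      simpa [Polynomial.eval_monomial, Pi.mul_def, Pi.pow_def] using this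

lemma QD_opval_continuousAt (u : ℂ) : ContinuousAt QD_opval ((u : ℂ) : OnePoint ℂ) := by
  rw [OnePoint.continuousAt_coe]
  exact continuousAt_id

lemma QD_deriv_ne_zero_of_injOn {f : ℂ → ℂ} {x : ℂ} {s : Set ℂ}
    (hs : s ∈ 𝓝 x) (hf : AnalyticAt ℂ f x) (hinj : Set.InjOn f s) :
    deriv f x ≠ 0 := by
  intro h0
  have hxs : x ∈ s := mem_of_mem_nhds hs
  have hs' : ∀ᶠ z in 𝓝 x, z ∈ s := hs
  set g : ℂ → ℂ := fun z => f z - f x with hgdef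
  have hga : AnalyticAt ℂ g x := hf.sub analyticAt_const
  have hgx : g x = 0 := sub_self _
  have hg0 : deriv g x = 0 := by
    rw [hgdef, deriv_sub_const, h0]
  by_cases htop : analyticOrderAt g x = ⊤
  · have hev : ∀ᶠ z in 𝓝 x, g z = 0 := analyticOrderAt_eq_top.mp htop
    have hne : ∀ᶠ z in 𝓝[≠] x, z ≠ x := self_mem_nhdsWithin
    obtain ⟨z, ⟨hz1, hz2⟩, hz3⟩ :=
      (((hev.and hs').filter_mono nhdsWithin_le_nhds).and hne).exists
    have : f z = f x := by rwa [hgdef, sub_eq_zero] at hz1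
    exact hz3 (hinj hz2 hxs this)
  · obtain ⟨n, hn⟩ : ∃ n : ℕ, analyticOrderAt g x = n := by
      obtain ⟨a, ha⟩ := WithTop.ne_top_iff_exists.mp htop
      exact ⟨a, ha.symm⟩
    obtain ⟨u, hu_an, hux, hu_ev⟩ := hga.analyticOrderAt_eq_natCast.mp hn
    have hn0 : n ≠ 0 := by
      rintro rfl
      have := hu_ev.self_of_nhds
      rw [hgx, pow_zero, one_smul] at this
      exact hux this.symm
    have hn1 : n ≠ 1 := by
      rintro rfl
      have hder : deriv g x = u x := by
        have h1 : g =ᶠ[𝓝 x] fun z => (z - x) * u z := by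
          filter_upwards [hu_ev] with z hz
          rw [hz, pow_one, smul_eq_mul]
        rw [h1.deriv_eq]
        have h2 : HasDerivAt (fun z : ℂ => (z - x) * u z)
            (1 * u x + (x - x) * deriv u x) x :=
          ((hasDerivAt_id x).sub_const x).mul hu_an.differentiableAt.hasDerivAt
        rw [h2.deriv]
        ring
      rw [hg0] at hder
      exact hux hder.symm
    have hn2 : 2 ≤ n := by omega
    have hnC : (n : ℂ) ≠ 0 := Nat.cast_ne_zero.mpr hn0
    set c : ℂ := Complex.exp (Complex.log (u x) / n) with hcdef
    have hc : c ^ n = u x := by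
      rw [hcdef, ← Complex.exp_nat_mul, mul_div_cancel₀ _ hnC, Complex.exp_log hux]
    have hcne : c ≠ 0 := Complex.exp_ne_zero _
    set v : ℂ → ℂ := fun z => Complex.exp ((n : ℂ)⁻¹ * Complex.log (u z / u x)) * c
      with hvdef
    have hv_an : AnalyticAt ℂ v x := by
      refine AnalyticAt.mul ?_ analyticAt_const
      refine AnalyticAt.cexp ?_
      refine AnalyticAt.mul analyticAt_const ?_
      refine AnalyticAt.clog (hu_an.div analyticAt_const hux) ?_
      rw [div_self hux]
      exact Complex.one_mem_slitPlane
    have hvne : ∀ z, v z ≠ 0 := fun z => mul_ne_zero (Complex.exp_ne_zero _) hcne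
    have hvn : ∀ᶠ z in 𝓝 x, (v z) ^ n = u z := by
      filter_upwards [hu_an.continuousAt.eventually_ne hux] with z huz
      have h1 : u z / u x ≠ 0 := div_ne_zero huz hux
      rw [hvdef]
      calc (Complex.exp ((n : ℂ)⁻¹ * Complex.log (u z / u x)) * c) ^ n
          = Complex.exp ((n:ℂ) * ((n : ℂ)⁻¹ * Complex.log (u z / u x))) * c ^ n := by
            rw [mul_pow, ← Complex.exp_nat_mul]
        _ = (u z / u x) * u x := by
            rw [← mul_assoc, mul_inv_cancel₀ hnC, one_mul, Complex.exp_log h1, hc]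
        _ = u z := div_mul_cancel₀ _ hux
    set φ : ℂ → ℂ := fun z => (z - x) * v z with hφdef
    have hφ_an : AnalyticAt ℂ φ x := (analyticAt_id.sub analyticAt_const).mul hv_an
    have hφx : φ x = 0 := by simp [hφdef]
    have hgφ : ∀ᶠ z in 𝓝 x, g z = (φ z) ^ n := by
      filter_upwards [hu_ev, hvn] with z h1 h2
      rw [h1, hφdef, mul_pow, h2, smul_eq_mul]
    have hCnot : ¬ (∀ᶠ z in 𝓝 x, φ z = φ x) := by
      intro hevc
      have hne : ∀ᶠ z in 𝓝[≠] x, z ≠ x := self_mem_nhdsWithin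
      obtain ⟨z, hz1, hz2⟩ :=
        ((hevc.filter_mono nhdsWithin_le_nhds).and hne).exists
      rw [hφx, hφdef] at hz1
      rcases mul_eq_zero.mp hz1 with h | h
      · exact hz2 (sub_eq_zero.mp h)
      · exact hvne z h
    have hmap := hφ_an.eventually_constant_or_nhds_le_map_nhds.resolve_left hCnot
    rw [hφx] at hmap
    obtain ⟨r, hr0, hsub⟩ := Metric.mem_nhds_iff.mp (Filter.inter_mem hs hgφ)
    have himg : φ '' (Metric.ball x r) ∈ 𝓝 (0:ℂ) :=
      hmap (Filter.image_mem_map (Metric.ball_mem_nhds x hr0))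
    obtain ⟨ζ, hζprim⟩ : ∃ ζ : ℂ, IsPrimitiveRoot ζ n :=
      ⟨_, Complex.isPrimitiveRoot_exp n hn0⟩
    have hζn : ζ ^ n = 1 := hζprim.pow_eq_one
    have hζ1 : ζ ≠ 1 := by
      have := hζprim.pow_ne_one_of_pos_of_lt (show 1 ≠ 0 by norm_num) (by omega)
      simpa using this
    have hT : φ '' (Metric.ball x r) ∩ (fun w : ℂ => ζ * w) ⁻¹' (φ '' (Metric.ball x r))
        ∈ 𝓝 (0:ℂ) := by
      refine Filter.inter_mem himg ?_
      have hc0 : (fun w : ℂ => ζ * w) 0 = 0 := mul_zero ζ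
      exact (continuous_const.mul continuous_id).continuousAt.preimage_mem_nhds
        (by simpa using himg)
    have hT' : ∀ᶠ w in 𝓝 (0:ℂ), w ∈ φ '' (Metric.ball x r)
        ∩ (fun w : ℂ => ζ * w) ⁻¹' (φ '' (Metric.ball x r)) := hT
    have hne0 : ∀ᶠ w in 𝓝[≠] (0:ℂ), w ≠ 0 := self_mem_nhdsWithin
    obtain ⟨w, hwT, hw0⟩ :=
      ((hT'.filter_mono nhdsWithin_le_nhds).and hne0).exists
    obtain ⟨⟨z₁, hz₁, hφz₁⟩, z₂, hz₂, hφz₂⟩ := hwT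
    have hw0' : w ≠ 0 := hw0
    have hzne : z₁ ≠ z₂ := by
      intro h
      rw [h, hφz₂] at hφz₁
      have hφz₁' : ζ * w = w := hφz₁
      have : (ζ - 1) * w = 0 := by linear_combination hφz₁'
      rcases mul_eq_zero.mp this with h' | h'
      · exact hζ1 (sub_eq_zero.mp h')
      · exact hw0' h'
    have hgz : g z₁ = g z₂ := by
      rw [(hsub hz₁).2, (hsub hz₂).2, hφz₁, hφz₂, mul_pow, hζn, one_mul]
    have hfz : f z₁ = f z₂ := by
      have := hgz
      rw [hgdef] at this
      simpa [sub_left_inj] using this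
    exact hzne (hinj (hsub hz₁).1 (hsub hz₂).1 hfz)

lemma QD_conj_eval (p : Polynomial ℂ) (w : ℂ) :
    (p.map (starRingEnd ℂ)).eval w
      = (starRingEnd ℂ) (p.eval ((starRingEnd ℂ) w)) := by
  rw [Polynomial.eval_map, ← Polynomial.eval₂_hom, Complex.conj_conj]

/-- Let `f = P/Q` be a rational map that is injective on the closed unit disk and has no
poles on the unit circle, and let `Ω = f(𝔻)`.  Then the map `σ = f ∘ η ∘ (f|_{𝔻̄})⁻¹`
(characterized by `σ(f(w)) = f(η(w))` for `|w| ≤ 1`) is continuous on `f(𝔻̄)`, fixes every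
point of `f(S¹) = ∂Ω`, and is anti-meromorphic on `Ω`; i.e., `Ω` is a quadrature domain
with Schwarz reflection map `σ`. -/
theorem image_of_univalent_rational_is_quadrature_domain
    (P Q : Polynomial ℂ) (hQ : Q ≠ 0) (hcop : IsCoprime P Q)
    (hinj : Set.InjOn (ratSphereEval P Q)
      ((fun z : ℂ => (z : OnePoint ℂ)) '' Metric.closedBall 0 1))
    (hpole : ∀ z ∈ Metric.sphere (0 : ℂ) 1, Q.eval z ≠ 0) :
    ∃ σ : OnePoint ℂ → OnePoint ℂ,
      (∀ w : ℂ, ‖w‖ ≤ 1 →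
        σ (ratSphereEval P Q (w : OnePoint ℂ))
          = ratSphereEval P Q (sphereUnitReflection (w : OnePoint ℂ))) ∧
      ContinuousOn σ
        (ratSphereEval P Q '' ((fun z : ℂ => (z : OnePoint ℂ)) '' Metric.closedBall 0 1)) ∧
      (∀ z ∈ Metric.sphere (0 : ℂ) 1,
        σ (ratSphereEval P Q (z : OnePoint ℂ)) = ratSphereEval P Q (z : OnePoint ℂ)) ∧
      ∃ g : ℂ → ℂ,
        MeromorphicOn (fun z => (starRingEnd ℂ) (g z))
          {z : ℂ | (z : OnePoint ℂ)
            ∈ ratSphereEval P Q '' ((fun z : ℂ => (z : OnePoint ℂ)) '' Metric.ball 0 1)} ∧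
        ∀ z : ℂ,
          (z : OnePoint ℂ)
              ∈ ratSphereEval P Q '' ((fun z : ℂ => (z : OnePoint ℂ)) '' Metric.ball 0 1) →
            σ (z : OnePoint ℂ) ≠ (∞ : OnePoint ℂ) → σ (z : OnePoint ℂ) = (g z : OnePoint ℂ) := by
  classical
  set F := ratSphereEval P Q with hFdef
  set S : Set (OnePoint ℂ) := (fun z : ℂ => (z : OnePoint ℂ)) '' Metric.closedBall 0 1
    with hSdef
  set Ω : Set (OnePoint ℂ) := F '' ((fun z : ℂ => (z : OnePoint ℂ)) '' Metric.ball 0 1)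
    with hΩdef
  have hFc : Continuous F := QD_rs_continuous P Q hQ hcop
  have hSc : IsCompact S := (isCompact_closedBall (0:ℂ) 1).image OnePoint.continuous_coe
  have hinvCont := QD_continuousOn_invFunOn hSc hFc.continuousOn hinj
  set invF := Function.invFunOn F S with hinvFdef
  set σ : OnePoint ℂ → OnePoint ℂ := fun y => F (sphereUnitReflection (invF y)) with hσdef
  have hleft : ∀ w : ℂ, ‖w‖ ≤ 1 → invF (F (w : OnePoint ℂ)) = (w : OnePoint ℂ) := by
    intro w hw
    exact hinj.leftInvOn_invFunOn
      ⟨w, by simpa [Metric.mem_closedBall, dist_zero_right] using hw, rfl⟩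
  have hprop1 : ∀ w : ℂ, ‖w‖ ≤ 1 → σ (F ↑w) = F (sphereUnitReflection ↑w) := by
    intro w hw
    show F (sphereUnitReflection (invF (F ↑w))) = F (sphereUnitReflection ↑w)
    rw [hleft w hw]
  refine ⟨σ, hprop1, ?_, ?_, ?_⟩
  · exact (hFc.comp QD_eta_continuous).comp_continuousOn hinvCont
  · intro z hz
    have hz1 : ‖z‖ = 1 := by simpa using hz
    have hz0 : z ≠ 0 := by intro h; rw [h] at hz1; simp at hz1
    have hrefl : sphereUnitReflection (z : OnePoint ℂ) = (z : OnePoint ℂ) := by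
      rw [QD_eta_coe, if_neg hz0]
      congr 1
      have hmul : (starRingEnd ℂ) z * z = 1 := by
        rw [mul_comm, Complex.mul_conj]
        norm_cast
        simp [Complex.normSq_eq_norm_sq, hz1]
      exact inv_eq_of_mul_eq_one_right hmul
    rw [hprop1 z (le_of_eq hz1), hrefl]
  · -- anti-meromorphic part
    set hh : ℂ → ℂ := fun z => QD_opval (invF (z : OnePoint ℂ)) with hhhdef
    set Pc := P.map (starRingEnd ℂ) with hPcdef
    set Qc := Q.map (starRingEnd ℂ) with hQcdef
    set cinf : ℂ := if P.degree < Q.degree then 0 else P.leadingCoeff / Q.leadingCoeff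
      with hcinfdef
    set g : ℂ → ℂ := fun z =>
      if invF (z : OnePoint ℂ) = ((0:ℂ) : OnePoint ℂ) ∧ (z : OnePoint ℂ) ∈ Ω then cinf
      else (starRingEnd ℂ) (Pc.eval ((hh z)⁻¹) / Qc.eval ((hh z)⁻¹)) with hgdef
    have hC1 : ∀ z : ℂ, (z : OnePoint ℂ) ∈ Ω →
        ∃ u : ℂ, ‖u‖ < 1 ∧ Q.eval u ≠ 0 ∧ invF (z : OnePoint ℂ) = (u : OnePoint ℂ)
          ∧ P.eval u / Q.eval u = z := by
      intro z hz
      obtain ⟨w, ⟨u, hu, rfl⟩, hF⟩ := hz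
      have hQu : Q.eval u ≠ 0 := by
        intro h
        rw [hFdef, QD_rs_coe, if_pos h] at hF
        exact (OnePoint.infty_ne_coe z) hF
      have hfu : P.eval u / Q.eval u = z := by
        rw [hFdef, QD_rs_coe, if_neg hQu] at hF
        exact OnePoint.coe_eq_coe.mp hF
      have hmemS : (u : OnePoint ℂ) ∈ S := ⟨u, Metric.ball_subset_closedBall hu, rfl⟩
      refine ⟨u, by simpa [Metric.mem_ball, dist_zero_right] using hu, hQu, ?_, hfu⟩
      rw [← hF]
      exact hinj.leftInvOn_invFunOn hmemS
    set T : Set ℂ := Metric.ball 0 1 ∩ {v : ℂ | Q.eval v ≠ 0} with hTdef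
    have hTopen : IsOpen T := by
      refine Metric.isOpen_ball.inter ?_
      have : {v : ℂ | Q.eval v ≠ 0} = (fun v => Q.eval v) ⁻¹' ({0}ᶜ) := rfl
      rw [this]
      exact isOpen_compl_singleton.preimage Q.continuous
    set fC : ℂ → ℂ := fun v => P.eval v / Q.eval v with hfCdef
    have hFcoe : ∀ v : ℂ, Q.eval v ≠ 0 → F (v : OnePoint ℂ) = ((fC v : ℂ) : OnePoint ℂ) := by
      intro v hv
      rw [hFdef, QD_rs_coe, if_neg hv]
    have hfCinj : Set.InjOn fC T := by
      intro a ha b hb hab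
      have h1 : F (a : OnePoint ℂ) = F (b : OnePoint ℂ) := by
        rw [hFcoe a ha.2, hFcoe b hb.2, hab]
      have := hinj ⟨a, Metric.ball_subset_closedBall ha.1, rfl⟩
        ⟨b, Metric.ball_subset_closedBall hb.1, rfl⟩ h1
      exact OnePoint.coe_eq_coe.mp this
    have hpana : ∀ (p : Polynomial ℂ) (u : ℂ), AnalyticAt ℂ (fun v => p.eval v) u := by
      intro p u
      rw [Complex.analyticAt_iff_eventually_differentiableAt]
      exact Filter.Eventually.of_forall fun v => p.differentiableAt
    have hfCana : ∀ u ∈ T, AnalyticAt ℂ fC u := fun u hu =>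
      (hpana P u).div (hpana Q u) hu.2
    have hfC_nhds : ∀ u ∈ T, ∀ t ∈ 𝓝 u, fC '' t ∈ 𝓝 (fC u) := by
      intro u hu t ht
      have h1 : ¬ ∀ᶠ v in 𝓝 u, fC v = fC u := by
        intro hev
        have hne : ∀ᶠ v in 𝓝[≠] u, v ≠ u := self_mem_nhdsWithin
        have hmemT : ∀ᶠ v in 𝓝 u, v ∈ T := hTopen.mem_nhds hu
        obtain ⟨v, ⟨hv1, hv2⟩, hv3⟩ :=
          (((hev.and hmemT).filter_mono nhdsWithin_le_nhds).and hne).exists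
        exact hv3 (hfCinj hv2 hu hv1)
      have h2 := ((hfCana u hu).eventually_constant_or_nhds_le_map_nhds).resolve_left h1
      exact h2 (Filter.image_mem_map ht)
    have hC2 : ∀ z : ℂ, (z : OnePoint ℂ) ∈ Ω → {y : ℂ | (y : OnePoint ℂ) ∈ Ω} ∈ 𝓝 z := by
      intro z hz
      obtain ⟨u, hu, hQu, hinvu, hfu⟩ := hC1 z hz
      have huT : u ∈ T := ⟨Metric.mem_ball.mpr (by simpa [dist_zero_right] using hu), hQu⟩
      have himg : fC '' T ∈ 𝓝 z := by
        have := hfC_nhds u huT T (hTopen.mem_nhds huT)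
        rwa [show fC u = z from hfu] at this
      refine Filter.mem_of_superset himg ?_
      rintro y ⟨v, hvT, rfl⟩
      exact ⟨(v : OnePoint ℂ), ⟨v, hvT.1, rfl⟩, hFcoe v hvT.2⟩
    have hΩFS : ∀ {y : OnePoint ℂ}, y ∈ Ω → y ∈ F '' S := by
      rintro y ⟨w, ⟨u, hu, rfl⟩, hF⟩
      exact ⟨(u : OnePoint ℂ), ⟨u, Metric.ball_subset_closedBall hu, rfl⟩, hF⟩
    have hC3 : ∀ z : ℂ, (z : OnePoint ℂ) ∈ Ω → DifferentiableAt ℂ hh z := by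
      intro z hz
      obtain ⟨u, hu, hQu, hinvu, hfu⟩ := hC1 z hz
      have huT : u ∈ T := ⟨Metric.mem_ball.mpr (by simpa [dist_zero_right] using hu), hQu⟩
      have himg : fC '' T ∈ 𝓝 z := by
        have := hfC_nhds u huT T (hTopen.mem_nhds huT)
        rwa [show fC u = z from hfu] at this
      have hFS : F '' S ∈ 𝓝 ((z : OnePoint ℂ)) := by
        rw [OnePoint.nhds_coe_eq]
        refine Filter.mem_of_superset (Filter.image_mem_map himg) ?_
        rintro y ⟨y', ⟨v, hvT, rfl⟩, rfl⟩
        exact ⟨(v : OnePoint ℂ), ⟨v, Metric.ball_subset_closedBall hvT.1, rfl⟩, hFcoe v hvT.2⟩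
      have hinvc : ContinuousAt invF (z : OnePoint ℂ) :=
        (hinvCont _ (hΩFS hz)).continuousAt hFS
      have hhc : ContinuousAt hh z := by
        have h1 : ContinuousAt QD_opval (invF ((z : ℂ) : OnePoint ℂ)) := by
          rw [hinvu]; exact QD_opval_continuousAt u
        have h2 : ContinuousAt (fun y : ℂ => invF ((y : ℂ) : OnePoint ℂ)) z :=
          hinvc.comp OnePoint.continuous_coe.continuousAt
        rw [hhhdef]
        show ContinuousAt (QD_opval ∘ fun y : ℂ => invF ((y : ℂ) : OnePoint ℂ)) z
        exact ContinuousAt.comp h1 h2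
      have hhz : hh z = u := by
        rw [hhhdef]; simp only; rw [hinvu, QD_opval_coe]
      have hev : ∀ᶠ y in 𝓝 z, fC (hh y) = y := by
        filter_upwards [hC2 z hz] with y hy
        obtain ⟨uy, huy, hQuy, hinvy, hfy⟩ := hC1 y hy
        rw [hhhdef]; simp only; rw [hinvy, QD_opval_coe]
        exact hfy
      have hderiv : HasDerivAt fC (deriv fC u) (hh z) := by
        rw [hhz]
        exact ((hfCana u huT).differentiableAt).hasDerivAt
      have hdne : deriv fC u ≠ 0 :=
        QD_deriv_ne_zero_of_injOn (hTopen.mem_nhds huT) (hfCana u huT) hfCinj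
      exact (HasDerivAt.of_local_left_inverse hhc hderiv hdne hev).differentiableAt
    have hana : ∀ z : ℂ, (z : OnePoint ℂ) ∈ Ω → AnalyticAt ℂ hh z := by
      intro z hz
      rw [Complex.analyticAt_iff_eventually_differentiableAt]
      filter_upwards [hC2 z hz] with y hy
      exact hC3 y hy
    refine ⟨g, ?_, ?_⟩
    · -- meromorphy
      intro z0 hz0
      have hform : MeromorphicAt (fun z => Pc.eval ((hh z)⁻¹) / Qc.eval ((hh z)⁻¹)) z0 :=
        (QD_meromorphicAt_polyEval Pc ((hana z0 hz0).meromorphicAt.inv)).div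
          (QD_meromorphicAt_polyEval Qc ((hana z0 hz0).meromorphicAt.inv))
      refine hform.congr ?_
      have hbad : ∀ a : ℂ,
          (invF (a : OnePoint ℂ) = ((0:ℂ) : OnePoint ℂ) ∧ (a : OnePoint ℂ) ∈ Ω) →
            a = P.eval 0 / Q.eval 0 := by
        rintro a ⟨ha0, haΩ⟩
        obtain ⟨u, hu, hQu, hinvu, hfu⟩ := hC1 a haΩ
        rw [hinvu] at ha0
        have hu0 : u = 0 := OnePoint.coe_eq_coe.mp ha0
        rw [← hfu, hu0]
      have hev : ∀ᶠ z : ℂ in 𝓝[≠] z0,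
          ¬(invF ((z : ℂ) : OnePoint ℂ) = ((0:ℂ) : OnePoint ℂ)
            ∧ ((z : ℂ) : OnePoint ℂ) ∈ Ω) := by
        by_cases hzc : P.eval 0 / Q.eval 0 = z0
        · have hne : ∀ᶠ z : ℂ in 𝓝[≠] z0, z ≠ z0 := self_mem_nhdsWithin
          filter_upwards [hne] with z hz hcond
          exact hz (by rw [hbad z hcond, hzc])
        · have hmem : {P.eval 0 / Q.eval 0}ᶜ ∈ 𝓝 z0 :=
            isOpen_compl_singleton.mem_nhds (by simpa using fun h => hzc h.symm)
          filter_upwards [eventually_nhdsWithin_of_eventually_nhds hmem] with z hz hcond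
          exact hz (by simpa using hbad z hcond)
      filter_upwards [hev] with z hz
      rw [hgdef]
      simp only [if_neg hz, Complex.conj_conj]
    · -- value identity
      intro z hz hσ
      obtain ⟨u, hu, hQu, hinvu, hfu⟩ := hC1 z hz
      have hhz : hh z = u := by
        rw [hhhdef]; simp only; rw [hinvu, QD_opval_coe]
      by_cases hu0 : u = 0
      · have hcond : invF (z : OnePoint ℂ) = ((0:ℂ) : OnePoint ℂ) ∧ (z : OnePoint ℂ) ∈ Ω :=
          ⟨by rw [hinvu, hu0], hz⟩
        have hgz : g z = cinf := if_pos hcond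
        have hσz : σ (z : OnePoint ℂ) = F ∞ := by
          show F (sphereUnitReflection (invF (z : OnePoint ℂ))) = F ∞
          rw [hinvu, hu0, QD_eta_coe, if_pos rfl]
        rw [hσz, hFdef, QD_rs_infty] at hσ ⊢
        by_cases h1 : Q.degree < P.degree
        · rw [if_pos h1] at hσ; exact absurd rfl hσ
        · rw [if_neg h1] at hσ ⊢
          rw [hgz, hcinfdef]
          by_cases h2 : P.degree < Q.degree
          · rw [if_pos h2, if_pos h2]
          · rw [if_neg h2, if_neg h2]
      · have hcond : ¬(invF (z : OnePoint ℂ) = ((0:ℂ) : OnePoint ℂ)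
            ∧ (z : OnePoint ℂ) ∈ Ω) := by
          rintro ⟨h1, -⟩
          rw [hinvu] at h1
          exact hu0 (OnePoint.coe_eq_coe.mp h1)
        have hgz : g z = (starRingEnd ℂ) (Pc.eval ((hh z)⁻¹) / Qc.eval ((hh z)⁻¹)) :=
          if_neg hcond
        have hσz : σ (z : OnePoint ℂ)
            = F (((((starRingEnd ℂ) u)⁻¹ : ℂ)) : OnePoint ℂ) := by
          show F (sphereUnitReflection (invF (z : OnePoint ℂ)))
            = F (((((starRingEnd ℂ) u)⁻¹ : ℂ)) : OnePoint ℂ)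
          rw [hinvu, QD_eta_coe, if_neg hu0]
        rw [hσz, hFdef, QD_rs_coe] at hσ ⊢
        by_cases hQv : Q.eval (((starRingEnd ℂ) u)⁻¹) = 0
        · rw [if_pos hQv] at hσ; exact absurd rfl hσ
        · rw [if_neg hQv, OnePoint.coe_eq_coe]
          rw [hgz, hhz, hPcdef, hQcdef, QD_conj_eval, QD_conj_eval, ← map_div₀,
            Complex.conj_conj, map_inv₀]
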